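/- Every bounded harmonic function for the simple random walk on the half-plane one-way lattice ℍ is constant; that is, if h : ℤ² → ℝ is bounded and satisfies h(x,y) = (1/3)·(h(x,y+1) + h(x,y−1) + h(x+sgn(y),y)) for all (x,y) with y ≠ 0, and h(x,0) = (1/2)·(h(x,1) + h(x,−1)) for all x, then h is constant. (The Poisson boundary of the simple random walk on ℍ is trivial.) -/

import Mathlib

private lemma half_plane_key (h : ℤ → ℤ → ℝ) (C : ℝ)
    (hC : ∀ x y : ℤ, |h x y| ≤ C)
    (hharm : ∀ x y : ℤ, y ≠ 0 →
      h x y = (1 / 3) * (h x (y + 1) + h x (y - 1) + h (x + Int.sign y) y))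
    (hharm0 : ∀ x : ℤ, h x 0 = (1 / 2) * (h x 1 + h x (-1))) :
    ∀ x y : ℤ, h (x + 1) y ≤ h x y := by
  set Sset : Set ℝ := Set.range (fun p : ℤ × ℤ => h (p.1 + 1) p.2 - h p.1 p.2) with hSset
  have hne : Sset.Nonempty := ⟨h (0 + 1) 0 - h 0 0, ⟨(0, 0), rfl⟩⟩
  have hbdd : BddAbove Sset := by
    refine ⟨2 * C, ?_⟩
    rintro z ⟨⟨x, y⟩, rfl⟩
    have h1 := abs_le.1 (hC (x + 1) y)
    have h2 := abs_le.1 (hC x y)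
    dsimp only
    linarith [h1.1, h1.2, h2.1, h2.2]
  set S : ℝ := sSup Sset with hS
  have hle : ∀ x y : ℤ, h (x + 1) y - h x y ≤ S := fun x y =>
    le_csSup hbdd ⟨(x, y), rfl⟩
  -- propagation of near-maximality
  have propR : ∀ x y : ℤ, 0 < y →
      3 * (h (x + 1) y - h x y) - 2 * S ≤ h (x + 1 + 1) y - h (x + 1) y := by
    intro x y hy
    have hsign : Int.sign y = 1 := Int.sign_eq_one_iff_pos.2 hy
    have e1 := hharm x y (by omega)
    have e2 := hharm (x + 1) y (by omega)
    rw [hsign] at e1 e2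
    have v1 := hle x (y + 1)
    have v2 := hle x (y - 1)
    linarith
  have propL : ∀ x y : ℤ, y < 0 →
      3 * (h (x + 1) y - h x y) - 2 * S ≤ h x y - h (x - 1) y := by
    intro x y hy
    have hsign : Int.sign y = -1 := Int.sign_eq_neg_one_iff_neg.2 hy
    have e1 := hharm x y (by omega)
    have e2 := hharm (x + 1) y (by omega)
    rw [hsign] at e1 e2
    rw [show x + (-1 : ℤ) = x - 1 from by ring] at e1
    rw [show x + 1 + (-1 : ℤ) = x from by ring] at e2
    have v1 := hle x (y + 1)
    have v2 := hle x (y - 1)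
    linarith
  have prop0 : ∀ x : ℤ, 2 * (h (x + 1) 0 - h x 0) - S ≤ h (x + 1) 1 - h x 1 := by
    intro x
    have e1 := hharm0 x
    have e2 := hharm0 (x + 1)
    have v := hle x (-1)
    linarith
  -- chains of near-maximal horizontal differences
  have chainR : ∀ (n : ℕ) (x y : ℤ), 0 < y → ∀ δ : ℝ,
      S - δ ≤ h (x + 1) y - h x y →
      S - 3 ^ n * δ ≤ h (x + (n : ℤ) + 1) y - h (x + (n : ℤ)) y := by
    intro n
    induction n with
    | zero => intro x y hy δ hd; simpa using hd
    | succ n ih =>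
      intro x y hy δ hd
      have hstep : S - 3 * δ ≤ h (x + 1 + 1) y - h (x + 1) y := by
        have := propR x y hy
        linarith
      have h2 := ih (x + 1) y hy (3 * δ) hstep
      push_cast
      rw [show x + ((n : ℤ) + 1) = x + 1 + (n : ℤ) from by ring, pow_succ]
      linarith
  have chainL : ∀ (n : ℕ) (x y : ℤ), y < 0 → ∀ δ : ℝ,
      S - δ ≤ h (x + 1) y - h x y →
      S - 3 ^ n * δ ≤ h (x - (n : ℤ) + 1) y - h (x - (n : ℤ)) y := by
    intro n
    induction n with
    | zero => intro x y hy δ hd; simpa using hd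
    | succ n ih =>
      intro x y hy δ hd
      have hstep : S - 3 * δ ≤ h (x - 1 + 1) y - h (x - 1) y := by
        have hp := propL x y hy
        rw [show x - 1 + 1 = x from by ring]
        linarith
      have h2 := ih (x - 1) y hy (3 * δ) hstep
      push_cast
      rw [show x - ((n : ℤ) + 1) = x - 1 - (n : ℤ) from by ring, pow_succ]
      linarith
  -- accumulated sums
  have sumR : ∀ (n : ℕ) (x y : ℤ), 0 < y → ∀ δ : ℝ, 0 ≤ δ →
      S - δ ≤ h (x + 1) y - h x y →
      h x y + (n : ℝ) * S - 2 * 3 ^ n * δ ≤ h (x + (n : ℤ)) y := by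
    intro n x y hy δ hδ hd
    induction n with
    | zero => simp; linarith
    | succ n ih =>
      have hc := chainR n x y hy δ hd
      have hpow : (0:ℝ) ≤ 3 ^ n * δ := by positivity
      push_cast
      rw [show x + ((n : ℤ) + 1) = x + (n : ℤ) + 1 from by ring, pow_succ]
      linarith
  have sumL : ∀ (n : ℕ) (x y : ℤ), y < 0 → ∀ δ : ℝ, 0 ≤ δ →
      S - δ ≤ h (x + 1) y - h x y →
      h (x - (n : ℤ)) y ≤ h (x + 1) y - ((n : ℝ) + 1) * S + 2 * 3 ^ n * δ := by
    intro n x y hy δ hδ hd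
    induction n with
    | zero => simp; linarith
    | succ n ih =>
      have hc := chainL (n + 1) x y hy δ hd
      have hpow : (0:ℝ) ≤ 3 ^ n * δ := by positivity
      push_cast at hc ⊢
      rw [show x - ((n : ℤ) + 1) = x - (n : ℤ) - 1 from by ring] at hc ⊢
      rw [show x - (n : ℤ) - 1 + 1 = x - (n : ℤ) from by ring, pow_succ] at hc
      rw [pow_succ]
      linarith
  -- S ≤ 0
  have hS0 : S ≤ 0 := by
    by_contra hpos
    push_neg at hpos
    obtain ⟨n, hn⟩ := exists_nat_gt (2 * C / S)
    have hnS : 2 * C < (n : ℝ) * S := by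
      rwa [div_lt_iff₀ hpos] at hn
    have hbound : ∀ ε : ℝ, 0 < ε → (n : ℝ) * S ≤ 2 * C + 4 * 3 ^ n * ε := by
      intro ε hε
      obtain ⟨z, hzmem, hz⟩ := exists_lt_of_lt_csSup hne (show S - ε < S from by linarith)
      obtain ⟨⟨x, y⟩, rfl⟩ := hzmem
      dsimp only at hz
      have h3pe : (0:ℝ) ≤ 3 ^ n * ε := by positivity
      rcases lt_trichotomy y 0 with hy | hy | hy
      · have hs := sumL n x y hy ε (le_of_lt hε) (le_of_lt hz)
        have b1 := abs_le.1 (hC (x - (n:ℤ)) y)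
        have b2 := abs_le.1 (hC (x + 1) y)
        linarith [b1.1, b2.2]
      · subst hy
        have hp := prop0 x
        have hstep : S - 2 * ε ≤ h (x + 1) 1 - h x 1 := by linarith
        have hs := sumR n x 1 one_pos (2 * ε) (by linarith) hstep
        have b1 := abs_le.1 (hC x 1)
        have b2 := abs_le.1 (hC (x + (n:ℤ)) 1)
        linarith [b1.1, b2.2]
      · have hs := sumR n x y hy ε (le_of_lt hε) (le_of_lt hz)
        have b1 := abs_le.1 (hC x y)
        have b2 := abs_le.1 (hC (x + (n:ℤ)) y)
        linarith [b1.1, b2.2]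
    have h3 : (0:ℝ) < 3 ^ n := by positivity
    have hεpos : 0 < ((n : ℝ) * S - 2 * C) / (8 * 3 ^ n) := by
      apply div_pos (by linarith) (by positivity)
    have hb := hbound _ hεpos
    have hkey : 4 * 3 ^ n * (((n : ℝ) * S - 2 * C) / (8 * 3 ^ n)) = ((n : ℝ) * S - 2 * C) / 2 := by
      field_simp
      ring
    rw [hkey] at hb
    linarith
  intro x y
  have := hle x y
  linarith

/-- Every bounded harmonic function for the simple random walk on the half-plane
one-way lattice ℍ is constant: the Poisson boundary is trivial. -/
theorem bounded_harmonic_constant (h : ℤ → ℤ → ℝ)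
    (hbdd : ∃ C : ℝ, ∀ x y : ℤ, |h x y| ≤ C)
    (hharm : ∀ x y : ℤ, y ≠ 0 →
      h x y = (1 / 3) * (h x (y + 1) + h x (y - 1) + h (x + Int.sign y) y))
    (hharm0 : ∀ x : ℤ, h x 0 = (1 / 2) * (h x 1 + h x (-1))) :
    ∀ x y x' y' : ℤ, h x y = h x' y' := by
  obtain ⟨C, hC⟩ := hbdd
  have key1 := half_plane_key h C hC hharm hharm0
  -- the reflected function
  have hgharm : ∀ x y : ℤ, y ≠ 0 →
      (fun x y => h (-x) (-y)) x y =
        (1/3) * ((fun x y => h (-x) (-y)) x (y+1) + (fun x y => h (-x) (-y)) x (y-1) +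
          (fun x y => h (-x) (-y)) (x + Int.sign y) y) := by
    intro x y hy
    dsimp only
    have e := hharm (-x) (-y) (by omega)
    rw [Int.sign_neg] at e
    rw [show -x + -Int.sign y = -(x + Int.sign y) from by ring] at e
    rw [show (-y + 1 : ℤ) = -(y - 1) from by ring, show (-y - 1 : ℤ) = -(y + 1) from by ring] at e
    rw [e]; ring
  have hgharm0 : ∀ x : ℤ, (fun x y => h (-x) (-y)) x 0 =
      (1/2) * ((fun x y => h (-x) (-y)) x 1 + (fun x y => h (-x) (-y)) x (-1)) := by
    intro x
    dsimp only
    rw [neg_zero, neg_neg]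
    have := hharm0 (-x)
    linarith
  have key2 := half_plane_key (fun x y => h (-x) (-y)) C (fun x y => hC (-x) (-y)) hgharm hgharm0
  have heq : ∀ x y : ℤ, h (x + 1) y = h x y := by
    intro x y
    refine le_antisymm (key1 x y) ?_
    have := key2 (-(x+1)) (-y)
    rw [show -(-(x+1)+1) = x from by ring, show -(-(x+1)) = x + 1 from by ring, neg_neg] at this
    exact this
  have hx0 : ∀ x y : ℤ, h x y = h 0 y := by
    intro x y
    induction x using Int.induction_on with
    | zero => rfl
    | succ i ih => rw [heq (i : ℤ) y]; exact ih
    | pred i ih =>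
      have hh := heq (-(i:ℤ) - 1) y
      rw [show -(i:ℤ) - 1 + 1 = -(i:ℤ) from by ring] at hh
      rw [← hh]; exact ih
  have rv : ∀ y : ℤ, y ≠ 0 → h 0 (y+1) + h 0 (y-1) = 2 * h 0 y := by
    intro y hy
    have e := hharm 0 y hy
    have e2 : h (0 + Int.sign y) y = h 0 y := hx0 _ y
    rw [e2] at e
    linarith
  have rv0 : h 0 1 + h 0 (-1) = 2 * h 0 0 := by have := hharm0 0; linarith
  set c : ℝ := h 0 1 - h 0 0 with hc
  have E : ∀ y : ℤ, h 0 (y + 1) - h 0 y = c := by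
    intro y
    induction y using Int.induction_on with
    | zero => norm_num [hc]
    | succ i ih =>
      have r := rv ((i : ℤ) + 1) (by omega)
      rw [show (i:ℤ) + 1 - 1 = (i:ℤ) from by ring] at r
      linarith
    | pred i ih =>
      rw [show -(i:ℤ) - 1 + 1 = -(i:ℤ) from by ring]
      rcases Nat.eq_zero_or_pos i with h0 | hipos
      · subst h0
        norm_num at ih ⊢
        linarith [rv0]
      · have r := rv (-(i:ℤ)) (by omega)
        rw [show -(i:ℤ) - 1 = -(i:ℤ) - 1 from rfl] at r
        linarith
  have hc0 : c = 0 := by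
    by_contra hcne
    have hcpos : 0 < |c| := abs_pos.2 hcne
    obtain ⟨n, hn⟩ := exists_nat_gt (2 * C / |c|)
    have hnc : 2 * C < (n : ℝ) * |c| := by rwa [div_lt_iff₀ hcpos] at hn
    have grow : ∀ m : ℕ, h 0 (m : ℤ) = h 0 0 + (m : ℝ) * c := by
      intro m
      induction m with
      | zero => simp
      | succ m ih =>
        have e := E (m : ℤ)
        push_cast
        linarith
    have g := grow n
    have b1 := abs_le.1 (hC 0 (n : ℤ))
    have b2 := abs_le.1 (hC 0 0)
    rcases (show c ≠ 0 from hcne).lt_or_gt with hlt | hlt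
    · rw [abs_of_neg hlt] at hnc
      linarith [b1.1, b2.2]
    · rw [abs_of_pos hlt] at hnc
      linarith [b1.2, b2.1]
  have cst : ∀ y : ℤ, h 0 y = h 0 0 := by
    intro y
    induction y using Int.induction_on with
    | zero => rfl
    | succ i ih =>
      have e := E (i : ℤ)
      rw [hc0] at e
      linarith
    | pred i ih =>
      have e := E (-(i:ℤ) - 1)
      rw [hc0, show -(i:ℤ) - 1 + 1 = -(i:ℤ) from by ring] at e
      linarith
  intro x y x' y'
  rw [hx0 x y, hx0 x' y', cst y, cst y']
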